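/- Let f(x) = a|x|³ + bx² + cx + d on ℝ with a, b ≥ 0 and r > 0. Then f is convex, and the proximal mapping is P_r f(x) = (r + 2b - √((r+2b)² - 12a(rx - c)))/(6a) if x < c/r, and P_r f(x) = (-(r+2b) + √((r+2b)² + 12a(rx - c)))/(6a) if x ≥ c/r. -/

import Mathlib

/-- `p` is a proximal point of `f` at `x` with parameter `r`. -/
def IsProx (f : ℝ → ℝ) (r x p : ℝ) : Prop :=
  ∀ y : ℝ, f p + r / 2 * (p - x) ^ 2 ≤ f y + r / 2 * (y - x) ^ 2

lemma cube_tangent (p y : ℝ) : |p|^3 + 3 * p * |p| * (y - p) ≤ |y|^3 := by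
  have h0 : p * |p| * y ≤ p^2*|y| := by
    calc p * |p| * y ≤ |p * |p| * y| := le_abs_self _
    _ = p^2*|y| := by rw [abs_mul, abs_mul, abs_abs, ← sq_abs p]; ring
  have h1 : (0:ℝ) ≤ (|y|-|p|)^2*(|y|+2*|p|) := by positivity
  nlinarith [h0, h1, sq_abs p, abs_nonneg p, abs_nonneg y]

lemma key_ineq (a b c r x p y : ℝ) (ha : 0 < a) (hb : 0 ≤ b)
    (hE : 3 * a * p * |p| + (2 * b + r) * p + c - r * x = 0) :
    a*|p|^3 + b*p^2 + c*p + r/2*(p-x)^2 + r/2*(y-p)^2 ≤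
      a*|y|^3 + b*y^2 + c*y + r/2*(y-x)^2 := by
  have hc := cube_tangent p y
  have hca := mul_le_mul_of_nonneg_left hc ha.le
  have hE' : (y - p) * (3 * a * p * |p| + (2 * b + r) * p + c - r * x) = 0 := by
    rw [hE]; ring
  nlinarith [hca, hE', mul_nonneg hb (sq_nonneg (y - p))]

lemma isProx_iff (a b c d r x p p₀ : ℝ) (ha : 0 < a) (hb : 0 ≤ b) (hr : 0 < r)
    (f : ℝ → ℝ) (hf : ∀ z, f z = a * |z| ^ 3 + b * z ^ 2 + c * z + d)
    (hE : 3 * a * p₀ * |p₀| + (2 * b + r) * p₀ + c - r * x = 0) :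
    IsProx f r x p ↔ p = p₀ := by
  constructor
  · intro hp
    have h1 := hp p₀
    rw [hf p, hf p₀] at h1
    have h2 := key_ineq a b c r x p₀ p ha hb hE
    have h5 : r / 2 * (p - p₀)^2 ≤ 0 := by linarith
    have h6 : (p - p₀)^2 ≤ 0 := by nlinarith [hr]
    have h3 : (p - p₀)^2 = 0 := le_antisymm h6 (sq_nonneg _)
    exact sub_eq_zero.mp (sq_eq_zero_iff.mp h3)
  · rintro rfl
    intro y
    rw [hf p, hf y]
    have h2 := key_ineq a b c r x p y ha hb hE
    nlinarith [mul_nonneg hr.le (sq_nonneg (y - p))]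

lemma abs_cube_convex : ConvexOn ℝ Set.univ (fun x : ℝ => |x|^3) := by
  refine ⟨convex_univ, fun x _ y _ t s ht hs hts => ?_⟩
  simp only [smul_eq_mul]
  have habs : |t*x+s*y| ≤ t*|x|+s*|y| := by
    calc |t*x+s*y| ≤ |t*x| + |s*y| := abs_add_le _ _
    _ = t*|x|+s*|y| := by rw [abs_mul, abs_mul, abs_of_nonneg ht, abs_of_nonneg hs]
  have h2 : (t*|x|+s*|y|)^3 ≤ t*|x|^3+s*|y|^3 := by
    have := (convexOn_pow (𝕜 := ℝ) 3).2 (Set.mem_Ici.2 (abs_nonneg x))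
      (Set.mem_Ici.2 (abs_nonneg y)) ht hs hts
    simpa using this
  calc |t*x+s*y|^3 ≤ (t*|x|+s*|y|)^3 := by
        apply pow_le_pow_left₀ (abs_nonneg _) habs
  _ ≤ t*|x|^3+s*|y|^3 := h2

/-- For `f(x) = a|x|³ + bx² + cx + d` with `a > 0`, `b ≥ 0`: `f` is convex and its
proximal mapping is given by explicit formulas on either side of `c/r`. -/
theorem prox_general_cubic (a b c d : ℝ) (ha : 0 < a) (hb : 0 ≤ b)
    (f : ℝ → ℝ) (hf : ∀ x, f x = a * |x| ^ 3 + b * x ^ 2 + c * x + d)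
    (r : ℝ) (hr : 0 < r) :
    ConvexOn ℝ Set.univ f ∧
    (∀ x, ∀ p, IsProx f r x p ↔
      p = if x < c / r then
        (r + 2 * b - Real.sqrt ((r + 2 * b) ^ 2 - 12 * a * (r * x - c))) / (6 * a)
      else
        (-(r + 2 * b) + Real.sqrt ((r + 2 * b) ^ 2 + 12 * a * (r * x - c))) / (6 * a)) := by
  have hfun : f = fun x => a * |x| ^ 3 + b * x ^ 2 + c * x + d := funext hf
  constructor
  · -- convexity
    rw [hfun]
    have h1 : ConvexOn ℝ Set.univ (fun x : ℝ => a * |x|^3) := abs_cube_convex.smul ha.le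
    have h2 : ConvexOn ℝ Set.univ (fun x : ℝ => b * x^2) :=
      (Even.convexOn_pow even_two).smul hb
    have h3 : ConvexOn ℝ Set.univ (fun x : ℝ => c * x + d) := by
      refine ⟨convex_univ, fun x _ y _ t s ht hs hts => ?_⟩
      simp only [smul_eq_mul]
      have h : c * (t * x + s * y) + d = t * (c * x + d) + s * (c * y + d) := by
        linear_combination (-d) * hts
      linarith [h.le]
    have heq : (fun x : ℝ => a * |x| ^ 3 + b * x ^ 2 + c * x + d) =
        ((fun x : ℝ => a * |x|^3) + fun x : ℝ => b * x^2) + fun x : ℝ => c * x + d := by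
      funext z; simp [Pi.add_apply]; ring
    rw [heq]; exact (h1.add h2).add h3
  · intro x p
    have hRpos : 0 < r + 2 * b := by positivity
    have h6a : (6 : ℝ) * a ≠ 0 := by positivity
    by_cases hx : x < c / r
    · -- case x < c/r : r*x - c < 0
      simp only [if_pos hx]
      have hxr : x * r < c := (lt_div_iff₀ hr).mp hx
      set R := r + 2 * b with hR
      set s := Real.sqrt (R ^ 2 - 12 * a * (r * x - c)) with hsdef
      have harg : 0 ≤ R ^ 2 - 12 * a * (r * x - c) := by nlinarith
      have hs2 : s ^ 2 = R ^ 2 - 12 * a * (r * x - c) := Real.sq_sqrt harg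
      have hsR : R ≤ s := by
        rw [hsdef]
        calc R = Real.sqrt (R ^ 2) := (Real.sqrt_sq hRpos.le).symm
        _ ≤ _ := Real.sqrt_le_sqrt (by nlinarith)
      set p₀ := (R - s) / (6 * a) with hp₀
      have hp0neg : p₀ ≤ 0 := div_nonpos_of_nonpos_of_nonneg (by linarith) (by positivity)
      have habs : |p₀| = -p₀ := abs_of_nonpos hp0neg
      have hE : 3 * a * p₀ * |p₀| + (2 * b + r) * p₀ + c - r * x = 0 := by
        rw [habs, hp₀, hR]
        field_simp
        ring_nf
        linear_combination (-3) * hs2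
      exact isProx_iff a b c d r x p p₀ ha hb hr f hf hE
    · -- case x ≥ c/r : r*x - c ≥ 0
      simp only [if_neg hx]
      have hxr : c ≤ x * r := by
        have := (div_le_iff₀ hr).mp (le_of_not_gt hx)
        linarith
      set R := r + 2 * b with hR
      set s := Real.sqrt (R ^ 2 + 12 * a * (r * x - c)) with hsdef
      have harg : 0 ≤ R ^ 2 + 12 * a * (r * x - c) := by nlinarith
      have hs2 : s ^ 2 = R ^ 2 + 12 * a * (r * x - c) := Real.sq_sqrt harg
      have hsR : R ≤ s := by
        rw [hsdef]
        calc R = Real.sqrt (R ^ 2) := (Real.sqrt_sq hRpos.le).symm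
        _ ≤ _ := Real.sqrt_le_sqrt (by nlinarith)
      set p₀ := (-R + s) / (6 * a) with hp₀
      have hp0pos : 0 ≤ p₀ := div_nonneg (by linarith) (by positivity)
      have habs : |p₀| = p₀ := abs_of_nonneg hp0pos
      have hE : 3 * a * p₀ * |p₀| + (2 * b + r) * p₀ + c - r * x = 0 := by
        rw [habs, hp₀, hR]
        field_simp
        ring_nf
        linear_combination (3) * hs2
      exact isProx_iff a b c d r x p p₀ ha hb hr f hf hE
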